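/- If X = {x_1,…,x_M} and Y = {y_1,…,y_N} are spherical t-designs on S^{m-1} and S^{n-1} respectively, and T = {t_1,…,t_K} ⊂ [-1,1] is a Chebyshev-type quadrature of degree t with weight ω_{m,n}, then for every monomial p(z) = z_1^{α_1}···z_{m+n}^{α_{m+n}} of total degree ≤ t, the average of p over the multiset L = {(√((1-t_k)/2) x_i, √((1+t_k)/2) y_j)} equals I₁·I₂·I₃, where I₁ is the normalized average of x_1^{α_1}···x_m^{α_m} over S^{m-1}, I₂ is the normalized average of y_1^{α_{m+1}}···y_n^{α_{m+n}} over S^{n-1}, and I₃ = (1/K) Σ_k ((1-t_k)/2)^{(α_1+…+α_m)/2} ((1+t_k)/2)^{(α_{m+1}+…+α_{m+n})/2} (with the convention that the multiset average factorizes as stated). -/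

import Mathlib

open MeasureTheory Real

/-- Surface (Hausdorff) measure concentrated on the unit sphere of `EuclideanSpace ℝ ι`. -/
noncomputable def sphereSurface (ι : Type) [Fintype ι] : Measure (EuclideanSpace ℝ ι) :=
  (μH[(Fintype.card ι : ℝ) - 1]).restrict (Metric.sphere (0 : EuclideanSpace ℝ ι) 1)

/-- `x` (a finite family of points, a multiset with multiplicity) is a spherical `t`-design on
the unit sphere of `EuclideanSpace ℝ ι`: all points lie on the sphere and the average over the
points of any polynomial of total degree `≤ t` equals its average over the sphere with respect
to normalized surface measure. -/
noncomputable def IsSphericalDesign (ι κ : Type) [Fintype ι] [Fintype κ] (t : ℕ)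
    (x : κ → EuclideanSpace ℝ ι) : Prop :=
  (∀ i, x i ∈ Metric.sphere (0 : EuclideanSpace ℝ ι) 1) ∧
  ∀ p : MvPolynomial ι ℝ, p.totalDegree ≤ t →
    (∫ z, MvPolynomial.eval (fun i => z i) p ∂(sphereSurface ι)) /
        (sphereSurface ι Set.univ).toReal
      = (∑ i, MvPolynomial.eval (fun j => x i j) p) / (Fintype.card κ : ℝ)

/-- The Jacobi weight `ω_{m,n}(x) = (1-x)^{(m-2)/2} (1+x)^{(n-2)/2}`. -/
noncomputable def jacobiWeight (m n : ℕ) (x : ℝ) : ℝ :=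
  (1 - x) ^ (((m : ℝ) - 2) / 2) * (1 + x) ^ (((n : ℝ) - 2) / 2)

/-- `T` is a Chebyshev-type quadrature of degree `t` with weight `ω` on `[-1,1]`. -/
noncomputable def IsChebyshevQuad (ω : ℝ → ℝ) (t K : ℕ) (T : Fin K → ℝ) : Prop :=
  (∀ k, T k ∈ Set.Icc (-1 : ℝ) 1) ∧
  ∀ p : Polynomial ℝ, p.natDegree ≤ t →
    ∫ x in Set.Icc (-1 : ℝ) 1, p.eval x * ω x
      = (1 / (K : ℝ)) * (∫ x in Set.Icc (-1 : ℝ) 1, ω x) * ∑ k, p.eval (T k)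

/-- The point of the unit sphere in `ℝ^m × ℝ^n` built from `x`, `y` and scalars `s, c`. -/
noncomputable def gluePt (m n : ℕ) (x : EuclideanSpace ℝ (Fin m)) (y : EuclideanSpace ℝ (Fin n))
    (s c : ℝ) : EuclideanSpace ℝ (Fin m ⊕ Fin n) :=
  WithLp.toLp 2 (fun i => Sum.elim (fun j => s * x j) (fun j => c * y j) i)

lemma design_monomial {ι κ : Type} [Fintype ι] [Fintype κ] {t : ℕ}
    {x : κ → EuclideanSpace ℝ ι} (hx : IsSphericalDesign ι κ t x)
    (β : ι → ℕ) (hβ : ∑ l, β l ≤ t) :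
    (∫ z, (∏ l, (z l) ^ β l) ∂(sphereSurface ι)) / (sphereSurface ι Set.univ).toReal
      = (∑ i, ∏ l, (x i l) ^ β l) / (Fintype.card κ : ℝ) := by
  have h := hx.2 (∏ l, (MvPolynomial.X l : MvPolynomial ι ℝ) ^ β l) ?_
  · simpa using h
  · calc (∏ l, (MvPolynomial.X l : MvPolynomial ι ℝ) ^ β l).totalDegree
        ≤ ∑ l, ((MvPolynomial.X l : MvPolynomial ι ℝ) ^ β l).totalDegree :=
          MvPolynomial.totalDegree_finset_prod _ _
      _ ≤ ∑ l, β l := Finset.sum_le_sum fun l _ => by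
          simpa using MvPolynomial.totalDegree_pow (MvPolynomial.X l : MvPolynomial ι ℝ) (β l) |>.trans (by simp)
      _ ≤ t := hβ

theorem stmt_13 (m n t M N K : ℕ) (hm : 1 ≤ m) (hn : 1 ≤ n)
    (X : Fin M → EuclideanSpace ℝ (Fin m))
    (hX : IsSphericalDesign (Fin m) (Fin M) t X)
    (Y : Fin N → EuclideanSpace ℝ (Fin n))
    (hY : IsSphericalDesign (Fin n) (Fin N) t Y)
    (T : Fin K → ℝ) (hT : IsChebyshevQuad (jacobiWeight m n) t K T)
    (α : Fin m ⊕ Fin n → ℕ) (hα : ∑ l, α l ≤ t) :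
    (∑ k : Fin K, ∑ i : Fin M, ∑ j : Fin N, ∏ l,
        (gluePt m n (X i) (Y j)
          (Real.sqrt ((1 - T k) / 2)) (Real.sqrt ((1 + T k) / 2)) l) ^ α l)
        / ((K : ℝ) * M * N)
      = ((∫ x, (∏ l : Fin m, (x l) ^ α (Sum.inl l)) ∂(sphereSurface (Fin m))) /
            (sphereSurface (Fin m) Set.univ).toReal) *
        ((∫ y, (∏ s : Fin n, (y s) ^ α (Sum.inr s)) ∂(sphereSurface (Fin n))) /
            (sphereSurface (Fin n) Set.univ).toReal) *
        ((1 / (K : ℝ)) * ∑ k : Fin K,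
          Real.sqrt ((1 - T k) / 2) ^ (∑ l : Fin m, α (Sum.inl l)) *
          Real.sqrt ((1 + T k) / 2) ^ (∑ s : Fin n, α (Sum.inr s))) := by
  have hsum : (∑ l, α l) = (∑ l : Fin m, α (Sum.inl l)) + (∑ s : Fin n, α (Sum.inr s)) := by
    rw [Fintype.sum_sum_type]
  have h1 := design_monomial hX (fun l => α (Sum.inl l)) (show (∑ l : Fin m, α (Sum.inl l)) ≤ t by rw [hsum] at hα; omega)
  have h2 := design_monomial hY (fun s => α (Sum.inr s)) (show (∑ s : Fin n, α (Sum.inr s)) ≤ t by rw [hsum] at hα; omega)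
  simp only [Fintype.card_fin] at h1 h2
  rw [h1, h2]
  have key : ∀ (k : Fin K) (i : Fin M) (j : Fin N),
      (∏ l, (gluePt m n (X i) (Y j)
          (Real.sqrt ((1 - T k) / 2)) (Real.sqrt ((1 + T k) / 2)) l) ^ α l)
      = (Real.sqrt ((1 - T k) / 2) ^ (∑ l : Fin m, α (Sum.inl l)) *
          Real.sqrt ((1 + T k) / 2) ^ (∑ s : Fin n, α (Sum.inr s))) *
        (∏ l, (X i l) ^ α (Sum.inl l)) * (∏ s, (Y j s) ^ α (Sum.inr s)) := by
    intro k i j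
    rw [Fintype.prod_sum_type]
    simp only [gluePt, WithLp.ofLp_toLp, Sum.elim_inl, Sum.elim_inr, mul_pow, Finset.prod_mul_distrib,
      Finset.prod_pow_eq_pow_sum]
    ring
  simp only [key]
  simp only [← Finset.sum_mul, ← Finset.mul_sum]
  simp only [div_eq_mul_inv, mul_inv]
  ring
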